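/- Let I ⊆ ℝ be an interval, φ : I → ℝ be C² with φ > 0 and φ' > 0 on I, let Ω ⊆ ℝⁿ be open, Q_T = Ω × (0,T], and let v, h ∈ C^{2,1}(Q_T) with h > 0 and v taking values in I. Set u := h·φ(v). Let V be continuous on Q_T and q ∈ ℝ \ {0}. If ∂_t u − Δu + V·u^q ≥ ∂_t h − Δh in Q_T, then ∂_t(hv) − Δ(hv) + h^q·V·φ(v)^q/φ'(v) ≥ (v − (φ(v) − 1)/φ'(v))·(∂_t h − Δh) + (φ''(v)/φ'(v))·|∇v|²·h in Q_T. -/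

import Mathlib

open Set

noncomputable def lap {n : ℕ} (f : EuclideanSpace ℝ (Fin n) → ℝ)
    (x : EuclideanSpace ℝ (Fin n)) : ℝ :=
  ∑ i, fderiv ℝ (fun y => fderiv ℝ f y (EuclideanSpace.single i 1)) x
      (EuclideanSpace.single i 1)

noncomputable def gradInner {n : ℕ} (f g : EuclideanSpace ℝ (Fin n) → ℝ)
    (x : EuclideanSpace ℝ (Fin n)) : ℝ :=
  ∑ i, fderiv ℝ f x (EuclideanSpace.single i 1) * fderiv ℝ g x (EuclideanSpace.single i 1)

noncomputable def timeDeriv {n : ℕ} (u : EuclideanSpace ℝ (Fin n) → ℝ → ℝ)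
    (x : EuclideanSpace ℝ (Fin n)) (t : ℝ) : ℝ :=
  deriv (u x) t

noncomputable def lapSpace {n : ℕ} (u : EuclideanSpace ℝ (Fin n) → ℝ → ℝ)
    (x : EuclideanSpace ℝ (Fin n)) (t : ℝ) : ℝ :=
  lap (fun y => u y t) x

section Helpers
variable {n : ℕ}

lemma fderiv_comp_apply_real {φ : ℝ → ℝ} {g : EuclideanSpace ℝ (Fin n) → ℝ}
    {y : EuclideanSpace ℝ (Fin n)}
    (hφ : DifferentiableAt ℝ φ (g y)) (hg : DifferentiableAt ℝ g y) (w : EuclideanSpace ℝ (Fin n)) :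
    fderiv ℝ (fun z => φ (g z)) y w = deriv φ (g y) * fderiv ℝ g y w := by
  have h1 : fderiv ℝ (φ ∘ g) y = (fderiv ℝ φ (g y)).comp (fderiv ℝ g y) :=
    fderiv_comp y hφ hg
  rw [show (fun z => φ (g z)) = φ ∘ g from rfl, h1, ContinuousLinearMap.comp_apply]
  have h3 : fderiv ℝ φ (g y) (fderiv ℝ g y w)
      = (fderiv ℝ g y w) • fderiv ℝ φ (g y) 1 := by
    rw [← map_smul]; norm_num
  rw [h3, fderiv_apply_one_eq_deriv]; simp [mul_comm]

lemma fderiv2_diff {f : EuclideanSpace ℝ (Fin n) → ℝ} {x : EuclideanSpace ℝ (Fin n)}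
    (hf : ContDiffAt ℝ 2 f x) (w : EuclideanSpace ℝ (Fin n)) :
    DifferentiableAt ℝ (fun y => fderiv ℝ f y w) x := by
  have h1 : ContDiffAt ℝ 1 (fderiv ℝ f) x := hf.fderiv_right (by norm_num)
  exact (h1.differentiableAt one_ne_zero).clm_apply (differentiableAt_const w)

lemma D2_mul {f g : EuclideanSpace ℝ (Fin n) → ℝ} {x : EuclideanSpace ℝ (Fin n)}
    (hf : ContDiffAt ℝ 2 f x) (hg : ContDiffAt ℝ 2 g x) (w : EuclideanSpace ℝ (Fin n)) :
    fderiv ℝ (fun y => fderiv ℝ (fun z => f z * g z) y w) x w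
      = fderiv ℝ (fun y => fderiv ℝ f y w) x w * g x
        + 2 * (fderiv ℝ f x w * fderiv ℝ g x w)
        + f x * fderiv ℝ (fun y => fderiv ℝ g y w) x w := by
  have hev : (fun y => fderiv ℝ (fun z => f z * g z) y w)
      =ᶠ[nhds x] fun y => fderiv ℝ f y w * g y + f y * fderiv ℝ g y w := by
    filter_upwards [hf.eventually (by norm_num), hg.eventually (by norm_num)] with y hfy hgy
    rw [fderiv_fun_mul (hfy.differentiableAt two_ne_zero) (hgy.differentiableAt two_ne_zero)]
    simp; ring
  rw [hev.fderiv_eq]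
  have dA : DifferentiableAt ℝ (fun y => fderiv ℝ f y w) x := fderiv2_diff hf w
  have dB : DifferentiableAt ℝ (fun y => fderiv ℝ g y w) x := fderiv2_diff hg w
  have df : DifferentiableAt ℝ f x := hf.differentiableAt two_ne_zero
  have dg : DifferentiableAt ℝ g x := hg.differentiableAt two_ne_zero
  rw [fderiv_fun_add (show DifferentiableAt ℝ (fun y => fderiv ℝ f y w * g y) x from dA.mul dg)
    (show DifferentiableAt ℝ (fun y => f y * fderiv ℝ g y w) x from df.mul dB), ContinuousLinearMap.add_apply,
    fderiv_fun_mul dA dg, fderiv_fun_mul df dB]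
  simp only [ContinuousLinearMap.add_apply, ContinuousLinearMap.smul_apply, smul_eq_mul]
  ring

lemma D2_comp {φ : ℝ → ℝ} {g : EuclideanSpace ℝ (Fin n) → ℝ} {x : EuclideanSpace ℝ (Fin n)}
    {I : Set ℝ} (hI : IsOpen I) (hφ : ContDiffOn ℝ 2 φ I)
    (hg : ContDiffAt ℝ 2 g x) (hgx : g x ∈ I) (w : EuclideanSpace ℝ (Fin n)) :
    fderiv ℝ (fun y => fderiv ℝ (fun z => φ (g z)) y w) x w
      = deriv (deriv φ) (g x) * (fderiv ℝ g x w * fderiv ℝ g x w)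
        + deriv φ (g x) * fderiv ℝ (fun y => fderiv ℝ g y w) x w := by
  have hgc : ContinuousAt g x := (hg.differentiableAt two_ne_zero).continuousAt
  have hmem : ∀ᶠ y in nhds x, g y ∈ I := hgc (hI.mem_nhds hgx)
  have hφd : ∀ s ∈ I, DifferentiableAt ℝ φ s := fun s hs =>
    ((hφ.contDiffAt (hI.mem_nhds hs)).differentiableAt two_ne_zero)
  have hev : (fun y => fderiv ℝ (fun z => φ (g z)) y w)
      =ᶠ[nhds x] fun y => deriv φ (g y) * fderiv ℝ g y w := by
    filter_upwards [hmem, hg.eventually (by norm_num)] with y hy hgy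
    exact fderiv_comp_apply_real (hφd _ hy) (hgy.differentiableAt two_ne_zero) w
  rw [hev.fderiv_eq]
  have hφ' : ContDiffOn ℝ 1 (deriv φ) I := hφ.deriv_of_isOpen hI (by norm_num)
  have hdφ : DifferentiableAt ℝ (deriv φ) (g x) :=
    ((hφ'.contDiffAt (hI.mem_nhds hgx)).differentiableAt one_ne_zero)
  have dg : DifferentiableAt ℝ g x := hg.differentiableAt two_ne_zero
  have dA : DifferentiableAt ℝ (fun y => deriv φ (g y)) x := hdφ.comp x dg
  have dB : DifferentiableAt ℝ (fun y => fderiv ℝ g y w) x := fderiv2_diff hg w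
  rw [fderiv_fun_mul dA dB]
  simp only [ContinuousLinearMap.add_apply, ContinuousLinearMap.smul_apply, smul_eq_mul]
  rw [fderiv_comp_apply_real hdφ dg w]
  ring

lemma lap_mul {f g : EuclideanSpace ℝ (Fin n) → ℝ} {x : EuclideanSpace ℝ (Fin n)}
    (hf : ContDiffAt ℝ 2 f x) (hg : ContDiffAt ℝ 2 g x) :
    lap (fun z => f z * g z) x
      = lap f x * g x + 2 * gradInner f g x + f x * lap g x := by
  simp only [lap, gradInner, Finset.sum_mul, Finset.mul_sum, ← Finset.sum_add_distrib]
  refine Finset.sum_congr rfl fun i _ => ?_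
  rw [D2_mul hf hg]

lemma lap_comp {φ : ℝ → ℝ} {g : EuclideanSpace ℝ (Fin n) → ℝ} {x : EuclideanSpace ℝ (Fin n)}
    {I : Set ℝ} (hI : IsOpen I) (hφ : ContDiffOn ℝ 2 φ I)
    (hg : ContDiffAt ℝ 2 g x) (hgx : g x ∈ I) :
    lap (fun z => φ (g z)) x
      = deriv (deriv φ) (g x) * gradInner g g x + deriv φ (g x) * lap g x := by
  simp only [lap, gradInner, Finset.mul_sum, ← Finset.sum_add_distrib]
  refine Finset.sum_congr rfl fun i _ => ?_
  rw [D2_comp hI hφ hg hgx]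

lemma gradInner_comp_right {φ : ℝ → ℝ} {f g : EuclideanSpace ℝ (Fin n) → ℝ}
    {x : EuclideanSpace ℝ (Fin n)}
    (hφ : DifferentiableAt ℝ φ (g x)) (hg : DifferentiableAt ℝ g x) :
    gradInner f (fun z => φ (g z)) x = deriv φ (g x) * gradInner f g x := by
  simp only [gradInner, Finset.mul_sum]
  refine Finset.sum_congr rfl fun i _ => ?_
  rw [fderiv_comp_apply_real hφ hg]; ring

end Helpers

/-- Lemma 4.2 (first part, Euclidean case): if `u = h·φ(v)` satisfies
`∂ₜu − Δu + V u^q ≥ ∂ₜh − Δh` in `Q_T`, then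
`∂ₜ(hv) − Δ(hv) + h^q V φ(v)^q/φ'(v) ≥ (v − (φ(v)−1)/φ'(v))(∂ₜh − Δh) + (φ''(v)/φ'(v))|∇v|² h`. -/
theorem lemma42_ge {n : ℕ} (T : ℝ)
    (Ω : Set (EuclideanSpace ℝ (Fin n))) (hΩ : IsOpen Ω)
    (I : Set ℝ) (hIopen : IsOpen I) (hIconn : I.OrdConnected)
    (φ : ℝ → ℝ) (hφ : ContDiffOn ℝ 2 φ I)
    (hφpos : ∀ s ∈ I, 0 < φ s) (hφ'pos : ∀ s ∈ I, 0 < deriv φ s)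
    (v h : EuclideanSpace ℝ (Fin n) → ℝ → ℝ)
    (hvx : ∀ x ∈ Ω, ∀ t ∈ Ioc (0:ℝ) T, ContDiffAt ℝ 2 (fun y => v y t) x)
    (hhx : ∀ x ∈ Ω, ∀ t ∈ Ioc (0:ℝ) T, ContDiffAt ℝ 2 (fun y => h y t) x)
    (hvt : ∀ x ∈ Ω, ∀ t ∈ Ioc (0:ℝ) T, DifferentiableAt ℝ (v x) t)
    (hht : ∀ x ∈ Ω, ∀ t ∈ Ioc (0:ℝ) T, DifferentiableAt ℝ (h x) t)
    (hvI : ∀ x ∈ Ω, ∀ t ∈ Ioc (0:ℝ) T, v x t ∈ I)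
    (hhpos : ∀ x ∈ Ω, ∀ t ∈ Ioc (0:ℝ) T, 0 < h x t)
    (V : EuclideanSpace ℝ (Fin n) → ℝ → ℝ)
    (hV : ContinuousOn (fun p : EuclideanSpace ℝ (Fin n) × ℝ => V p.1 p.2) (Ω ×ˢ Ioc 0 T))
    (q : ℝ) (hq : q ≠ 0)
    (u : EuclideanSpace ℝ (Fin n) → ℝ → ℝ)
    (hu : u = fun y s => h y s * φ (v y s))
    (hineq : ∀ x ∈ Ω, ∀ t ∈ Ioc (0:ℝ) T,
      timeDeriv u x t - lapSpace u x t + V x t * u x t ^ q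
        ≥ timeDeriv h x t - lapSpace h x t) :
    ∀ x ∈ Ω, ∀ t ∈ Ioc (0:ℝ) T,
      timeDeriv (fun y s => h y s * v y s) x t
          - lapSpace (fun y s => h y s * v y s) x t
          + h x t ^ q * V x t * φ (v x t) ^ q / deriv φ (v x t)
        ≥ (v x t - (φ (v x t) - 1) / deriv φ (v x t)) *
            (timeDeriv h x t - lapSpace h x t)
          + deriv (deriv φ) (v x t) / deriv φ (v x t) *
              (gradInner (fun y => v y t) (fun y => v y t) x) * h x t := by
  intro x hx t ht
  have key := hineq x hx t ht
  have hF : ContDiffAt ℝ 2 (fun y => h y t) x := hhx x hx t ht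
  have hG : ContDiffAt ℝ 2 (fun y => v y t) x := hvx x hx t ht
  have hvI' : v x t ∈ I := hvI x hx t ht
  have hp : 0 < deriv φ (v x t) := hφ'pos _ hvI'
  have hφat : ContDiffAt ℝ 2 φ (v x t) := hφ.contDiffAt (hIopen.mem_nhds hvI')
  have hφd : DifferentiableAt ℝ φ (v x t) := hφat.differentiableAt two_ne_zero
  have hGd : DifferentiableAt ℝ (fun y => v y t) x := hG.differentiableAt two_ne_zero
  have hφG : ContDiffAt ℝ 2 (fun y => φ (v y t)) x := hφat.comp x hG
  have hht' := hht x hx t ht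
  have hvt' := hvt x hx t ht
  have hpos := hhpos x hx t ht
  have hφpos' := hφpos _ hvI'
  -- time derivatives
  have E3 : timeDeriv (fun y s => h y s * v y s) x t
      = deriv (h x) t * v x t + h x t * deriv (v x) t := by
    simp only [timeDeriv]
    exact deriv_fun_mul hht' hvt'
  have Ephi : deriv (fun s => φ (v x s)) t = deriv φ (v x t) * deriv (v x) t := by
    have := deriv_comp t hφd hvt'
    exact this
  have E1 : timeDeriv u x t
      = deriv (h x) t * φ (v x t) + h x t * (deriv φ (v x t) * deriv (v x) t) := by
    simp only [timeDeriv, hu]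
    have hcomp : DifferentiableAt ℝ (fun s => φ (v x s)) t := hφd.comp t hvt'
    rw [deriv_fun_mul hht' hcomp, Ephi]
  -- space derivatives
  have E4 : lapSpace (fun y s => h y s * v y s) x t
      = lapSpace h x t * v x t + 2 * gradInner (fun y => h y t) (fun y => v y t) x
        + h x t * lapSpace v x t := by
    simpa [lapSpace] using lap_mul hF hG
  have E2 : lapSpace u x t
      = lapSpace h x t * φ (v x t)
        + 2 * (deriv φ (v x t) * gradInner (fun y => h y t) (fun y => v y t) x)
        + h x t * (deriv (deriv φ) (v x t) * gradInner (fun y => v y t) (fun y => v y t) x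
            + deriv φ (v x t) * lapSpace v x t) := by
    have e1 : lapSpace u x t = lap (fun y => h y t * φ (v y t)) x := by
      simp [lapSpace, hu]
    rw [e1, lap_mul hF hφG, gradInner_comp_right hφd hGd,
      lap_comp hIopen hφ hG hvI']
    simp [lapSpace]
  -- rpow
  have E5 : u x t ^ q = h x t ^ q * φ (v x t) ^ q := by
    rw [hu]
    exact Real.mul_rpow hpos.le hφpos'.le
  rw [E1, E2, E5] at key
  rw [E3, E4]
  rw [ge_iff_le, ← sub_nonneg]
  have hid : deriv (h x) t * v x t + h x t * deriv (v x) t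
        - (lapSpace h x t * v x t + 2 * gradInner (fun y => h y t) (fun y => v y t) x
            + h x t * lapSpace v x t)
        + h x t ^ q * V x t * φ (v x t) ^ q / deriv φ (v x t)
      - ((v x t - (φ (v x t) - 1) / deriv φ (v x t)) *
            (timeDeriv h x t - lapSpace h x t)
          + deriv (deriv φ) (v x t) / deriv φ (v x t) *
              (gradInner (fun y => v y t) (fun y => v y t) x) * h x t)
      = ((deriv (h x) t * φ (v x t) + h x t * (deriv φ (v x t) * deriv (v x) t))
          - (lapSpace h x t * φ (v x t)
            + 2 * (deriv φ (v x t) * gradInner (fun y => h y t) (fun y => v y t) x)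
            + h x t * (deriv (deriv φ) (v x t) * gradInner (fun y => v y t) (fun y => v y t) x
                + deriv φ (v x t) * lapSpace v x t))
          + V x t * (h x t ^ q * φ (v x t) ^ q)
          - (timeDeriv h x t - lapSpace h x t)) / deriv φ (v x t) := by
    have hT : timeDeriv h x t = deriv (h x) t := rfl
    rw [hT]
    field_simp
    ring
  rw [hid]
  exact div_nonneg (by linarith [key]) hp.le
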